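/- Let n ≥ 1, let k ≥ 1 be odd, and let f₁, …, f_r : (Fin n → ZMod 2) → (Fin n → ZMod 2) be arbitrary round functions. For every initial state (L₁⁰, …, L_k⁰, R⁰) of the n:kn-UFN2 and every r ≥ 0, the XOR of all k+1 blocks after r rounds satisfies L₁^r ⊕ ⋯ ⊕ L_k^r ⊕ R^r = (L₁⁰ ⊕ ⋯ ⊕ L_k⁰ ⊕ R⁰) ⊕ f₁(R⁰) ⊕ f₂(R¹) ⊕ ⋯ ⊕ f_r(R^{r−1}), where R^{i−1} denotes the last block of the state after i−1 rounds. -/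
import Mathlib


/-- An `n`-bit block, i.e. a bit string of length `n`. -/
abbrev Blk (n : ℕ) : Type := Fin n → ZMod 2

/-- The state of a `(k+1)`-block Feistel network: `k+1` blocks of `n` bits each. -/
abbrev St (n k : ℕ) : Type := Fin (k + 1) → Blk n

/-- One round of the `n:kn`-UFN2 with round function `f : Blk n → Blk n`:
`(L₁, …, L_k, R) ↦ (R, L₁ ⊕ f R, …, L_k ⊕ f R)`.
State coordinates `0, …, k-1` are `L₁, …, L_k` and coordinate `k` is `R`. -/
def ufn2Round {n k : ℕ} (f : Blk n → Blk n) (s : St n k) : St n k :=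
  fun i =>
    if h : (i : ℕ) = 0 then s (Fin.last k)
    else s ⟨(i : ℕ) - 1, by have := i.isLt; omega⟩ + f (s (Fin.last k))

/-- The `r`-round `n:kn`-UFN2 with round functions `f 0, …, f (r-1)`, applied with `f 0`
first. -/
def ufn2Run {n k : ℕ} : (r : ℕ) → (Fin r → (Blk n → Blk n)) → St n k → St n k
  | 0, _, s => s
  | r + 1, f, s => ufn2Round (f (Fin.last r)) (ufn2Run r (fun i => f i.castSucc) s)

lemma blk_add_self {n : ℕ} (v : Blk n) : v + v = 0 := by
  funext j
  exact CharTwo.add_self_eq_zero _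

lemma ufn2Round_sum {n k : ℕ} (hko : Odd k) (f : Blk n → Blk n) (s : St n k) :
    ∑ i : Fin (k + 1), ufn2Round f s i = (∑ i : Fin (k + 1), s i) + f (s (Fin.last k)) := by
  have h0 : ufn2Round f s 0 = s (Fin.last k) := by simp [ufn2Round]
  have hsucc : ∀ i : Fin k, ufn2Round f s i.succ = s i.castSucc + f (s (Fin.last k)) := by
    intro i
    simp only [ufn2Round, Fin.val_succ]
    rw [dif_neg (by omega)]
    congr 1
  rw [Fin.sum_univ_succ, h0]
  simp only [hsucc]
  rw [Finset.sum_add_distrib, Finset.sum_const, Finset.card_univ, Fintype.card_fin]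
  obtain ⟨m, hm⟩ := hko
  have hk2 : k • f (s (Fin.last k)) = f (s (Fin.last k)) := by
    calc k • f (s (Fin.last k)) = (2 * m + 1) • f (s (Fin.last k)) := by rw [← hm]
      _ = m • (f (s (Fin.last k)) + f (s (Fin.last k))) + f (s (Fin.last k)) := by
          rw [add_nsmul, one_nsmul, two_mul, add_nsmul, ← nsmul_add]
      _ = f (s (Fin.last k)) := by rw [blk_add_self, smul_zero, zero_add]
  rw [hk2]
  rw [Fin.sum_univ_castSucc (f := s)]
  abel

/-- If `k` is odd, then for any `r` rounds of the `n:kn`-UFN2 with arbitrary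
round functions, the XOR of all `k+1` blocks after `r` rounds satisfies
`L₁^r ⊕ ⋯ ⊕ L_k^r ⊕ R^r = (L₁⁰ ⊕ ⋯ ⊕ L_k⁰ ⊕ R⁰) ⊕ f₁(R⁰) ⊕ f₂(R¹) ⊕ ⋯ ⊕ f_r(R^{r−1})`,
where `R^{i}` is the last block of the state after `i` rounds. -/
theorem ufn2_odd_block_xor_identity (n k r : ℕ) (hn : 1 ≤ n) (hk : 1 ≤ k) (hko : Odd k)
    (f : Fin r → (Blk n → Blk n)) (x : St n k) :
    ∑ i : Fin (k + 1), ufn2Run r f x i =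
      (∑ i : Fin (k + 1), x i) +
        ∑ t : Fin r,
          f t (ufn2Run (t : ℕ) (fun u => f (Fin.castLE (by have := t.isLt; omega) u)) x
            (Fin.last k)) := by
  induction r with
  | zero => simp [ufn2Run]
  | succ r ih =>
    show ∑ i : Fin (k + 1),
        ufn2Round (f (Fin.last r)) (ufn2Run r (fun i => f i.castSucc) x) i = _
    rw [ufn2Round_sum hko, ih (fun i => f i.castSucc), Fin.sum_univ_castSucc
      (f := fun t : Fin (r + 1) => f t (ufn2Run (t : ℕ)
        (fun u => f (Fin.castLE (by have := t.isLt; omega) u)) x (Fin.last k)))]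
    have h1 : ∀ t : Fin r,
        f t.castSucc (ufn2Run (t : ℕ)
            (fun u => f ((Fin.castLE (by have := t.isLt; omega) u)).castSucc) x (Fin.last k)) =
        f t.castSucc (ufn2Run (t : ℕ)
            (fun u => f (Fin.castLE (by have := t.isLt; omega : (t:ℕ) ≤ r + 1) u)) x
            (Fin.last k)) := by
      intro t; rfl
    simp only [h1]
    have h2 : ufn2Run ((Fin.last r : Fin (r+1)) : ℕ)
        (fun u => f (Fin.castLE (by have := (Fin.last r).isLt; omega) u)) x (Fin.last k) =
        ufn2Run r (fun i : Fin r => f i.castSucc) x (Fin.last k) := by rfl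
    rw [h2, add_assoc]
    congr 2
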